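/- In a fieldoid, if two elements are summable (a + b is defined), then they are multipliable (a × b is defined). -/

import Mathlib

/-- A fieldoid: like a partially additive field, but both addition and multiplication are
partial operations (modeled via `Option`, `none` = undefined). Each non-zero element has its
own multiplicative identity `1_a`. -/
structure Fieldoid (Q : Type*) where
  add : Q → Q → Option Q
  mul : Q → Q → Option Q
  zero : Q → Q
  one : Q → Q
  neg : Q → Q
  inv : Q → Q
  add_comm : ∀ a b, add a b = add b a
  mul_comm : ∀ a b, mul a b = mul b a
  add_assoc : ∀ a b c, (add a b).bind (fun x => add x c) = (add b c).bind (fun x => add a x)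
  mul_assoc : ∀ a b c, (mul a b).bind (fun x => mul x c) = (mul b c).bind (fun x => mul a x)
  left_distrib : ∀ a b c, (add b c).bind (fun x => mul a x) =
    (mul a b).bind (fun x => (mul a c).bind (fun y => add x y))
  add_zero : ∀ a, add a (zero a) = some a
  zero_unique : ∀ a z, add a z = some a → z = zero a
  mul_one : ∀ a, (¬ ∃ b, a = zero b) → mul a (one a) = some a
  one_unique : ∀ a e, (¬ ∃ b, a = zero b) → mul a e = some a → e = one a
  add_neg : ∀ a, add a (neg a) = some (zero a)
  mul_inv : ∀ a, (¬ ∃ b, a = zero b) → mul a (inv a) = some (one a)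
  nontrivial : ∀ a b, a = zero b → ∃ c, (¬ ∃ d, c = zero d) ∧ a = zero c

namespace Fieldoid
variable {Q : Type*} (F : Fieldoid Q)

/-- `a` is a zero element. -/
def IsZero (a : Q) : Prop := ∃ b, a = F.zero b

/-- `a` and `b` are summable (their sum is defined). -/
def Summable (a b : Q) : Prop := (F.add a b).isSome

/-- `a` and `b` are multipliable (their product is defined). -/
def Mulable (a b : Q) : Prop := (F.mul a b).isSome

section
variable {Q : Type*} (F : Fieldoid Q)

private lemma sq_nonzero (a : Q) (h : ¬ ∃ b, a = F.zero b) : ∃ v, F.mul a a = some v := by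
  have h1 := F.mul_assoc a a (F.inv a)
  rw [F.mul_inv a h] at h1
  simp only [Option.bind_some] at h1
  rw [F.mul_one a h] at h1
  obtain ⟨x, hx, -⟩ := Option.bind_eq_some_iff.mp h1
  exact ⟨x, hx⟩

private lemma one_mul_zero (c : Q) (hc : ¬ ∃ b, c = F.zero b) :
    F.mul (F.one c) (F.zero c) = some (F.zero c) := by
  have h1 := F.left_distrib (F.one c) c (F.zero c)
  rw [F.add_zero c] at h1
  simp only [Option.bind_some] at h1
  rw [F.mul_comm (F.one c) c, F.mul_one c hc] at h1
  simp only [Option.bind_some] at h1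
  obtain ⟨q, hq, hcq⟩ := Option.bind_eq_some_iff.mp h1.symm
  rw [hq, F.zero_unique c q hcq]

private lemma zero_mul (c : Q) (hc : ¬ ∃ b, c = F.zero b) :
    ∃ p, F.mul (F.zero c) c = some p := by
  have h1 := F.mul_assoc (F.zero c) c (F.inv c)
  rw [F.mul_inv c hc] at h1
  simp only [Option.bind_some] at h1
  rw [F.mul_comm (F.zero c) (F.one c), F.one_mul_zero c hc] at h1
  obtain ⟨x, hx, -⟩ := Option.bind_eq_some_iff.mp h1
  exact ⟨x, hx⟩

private lemma zero_sq (c : Q) (hc : ¬ ∃ b, c = F.zero b) :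
    ∃ v, F.mul (F.zero c) (F.zero c) = some v := by
  obtain ⟨p, hp⟩ := F.zero_mul c hc
  have h1 := F.left_distrib (F.zero c) c (F.zero c)
  rw [F.add_zero c] at h1
  simp only [Option.bind_some] at h1
  rw [hp] at h1
  simp only [Option.bind_some] at h1
  obtain ⟨x, hx, -⟩ := Option.bind_eq_some_iff.mp h1.symm
  exact ⟨x, hx⟩

private lemma sq (s : Q) : ∃ v, F.mul s s = some v := by
  by_cases h : ∃ b, s = F.zero b
  · obtain ⟨b, hb⟩ := h
    obtain ⟨c, hc, hsz⟩ := F.nontrivial s b hb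
    rw [hsz]
    exact F.zero_sq c hc
  · exact F.sq_nonzero s h

end

end Fieldoid
/-- In a fieldoid, summable elements are multipliable. -/
theorem summable_mulable {Q : Type*} (F : Fieldoid Q) (a b : Q) :
    F.Summable a b → F.Mulable a b := by
  intro h
  obtain ⟨s, hs⟩ := Option.isSome_iff_exists.mp h
  obtain ⟨v, hv⟩ := Fieldoid.sq F s
  -- s × (a + b) = s×a + s×b
  have h1 := F.left_distrib s a b
  rw [hs] at h1
  simp only [Option.bind_some] at h1
  rw [hv] at h1
  obtain ⟨u, hu, -⟩ := Option.bind_eq_some_iff.mp h1.symm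
  -- a × (a + b) = a×a + a×b
  have h2 := F.left_distrib a a b
  rw [hs] at h2
  simp only [Option.bind_some] at h2
  rw [F.mul_comm a s, hu] at h2
  obtain ⟨w, hw, hrest⟩ := Option.bind_eq_some_iff.mp h2.symm
  rw [hw] at h2
  simp only [Option.bind_some] at h2
  obtain ⟨x, hx, -⟩ := Option.bind_eq_some_iff.mp h2.symm
  exact Option.isSome_iff_exists.mpr ⟨x, hx⟩
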